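/- arXiv:2511.19153 — 2 statements merged into one kernel-verified Lean document; each statement's English description precedes it below -/
import Mathlib

section
/- Let G be a directed graph with unique source s and unique sink t in which every vertex lies on an s-t path. For every vertex v, the extension ext(v) — the chain of s-dominators of v from s to v, followed by the chain of t-dominators of v from v to t — is a safe sequence: every set of s-t walks that covers all vertices of G contains a walk having ext(v) as a subsequence. -/
namespace FD

variable {V : Type*}

/-- A walk: nonempty vertex sequence with consecutive pairs edges. -/
def IsWalk (E : V → V → Prop) (l : List V) : Prop := l ≠ [] ∧ l.Chain' E

/-- A walk from `s` to `t`. -/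
def IsWalkFromTo (E : V → V → Prop) (s t : V) (l : List V) : Prop :=
  IsWalk E l ∧ l.head? = some s ∧ l.getLast? = some t

/-- A path from `s` to `t`: a walk with no repeated vertices. -/
def IsPathFromTo (E : V → V → Prop) (s t : V) (l : List V) : Prop :=
  IsWalkFromTo E s t l ∧ l.Nodup

/-- `s` is the unique source: a vertex has no incoming edge iff it is `s`. -/
def UniqueSource (E : V → V → Prop) (s : V) : Prop := ∀ v, (¬ ∃ u, E u v) ↔ v = s

/-- `t` is the unique sink: a vertex has no outgoing edge iff it is `t`. -/
def UniqueSink (E : V → V → Prop) (t : V) : Prop := ∀ v, (¬ ∃ w, E v w) ↔ v = t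

/-- `u` s-dominates `v`: every `s`-`v` path contains `u`. -/
def SDom (E : V → V → Prop) (s u v : V) : Prop := ∀ p, IsPathFromTo E s v p → u ∈ p

/-- `u` t-dominates `v`: every `v`-`t` path contains `u`. -/
def TDom (E : V → V → Prop) (t u v : V) : Prop := ∀ p, IsPathFromTo E v t p → u ∈ p

/-- `l` is the chain of s-dominators of `v`, listed in dominance order from `s` to `v`. -/
def IsSDomChain (E : V → V → Prop) (s v : V) (l : List V) : Prop :=
  l.Nodup ∧ (∀ u, u ∈ l ↔ SDom E s u v) ∧
    l.Chain' (fun a b => SDom E s a b) ∧ l.head? = some s ∧ l.getLast? = some v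

/-- `l` is the chain of t-dominators of `v`, listed in order from `v` to `t`. -/
def IsTDomChain (E : V → V → Prop) (t v : V) (l : List V) : Prop :=
  l.Nodup ∧ (∀ u, u ∈ l ↔ TDom E t u v) ∧
    l.Chain' (fun a b => TDom E t b a) ∧ l.head? = some v ∧ l.getLast? = some t

/-- `x = ext(v)`: the s-dominator chain of `v` (from `s` to `v`) concatenated with the
t-dominator chain of `v` (from `v` to `t`), with the duplicate `v` removed. -/
def IsExtension (E : V → V → Prop) (s t v : V) (x : List V) : Prop :=
  ∃ ds dt, IsSDomChain E s v ds ∧ IsTDomChain E t v dt ∧ x = ds ++ dt.tail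

/-- `P` is a `C`-walk cover: a set of `s`-`t` walks such that every vertex of `C`
lies on some walk of `P`. -/
def WalkCover (E : V → V → Prop) (s t : V) (C : Set V) (P : Set (List V)) : Prop :=
  (∀ w ∈ P, IsWalkFromTo E s t w) ∧ ∀ c ∈ C, ∃ w ∈ P, c ∈ w

/-- `X` is a `C`-safe sequence: every `C`-walk cover contains a walk having `X`
as a subsequence. -/
def SafeSeq (E : V → V → Prop) (s t : V) (C : Set V) (X : List V) : Prop :=
  ∀ P, WalkCover E s t C P → ∃ w ∈ P, X.Sublist w

/-- The list of edges traversed by a walk, in order (with multiplicity). -/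
def walkEdges (l : List V) : List (V × V) := l.zip l.tail

/-- `idoms` is the immediate s-dominator (parent in the s-dominator tree) function:
`idoms s = s`, and for `v ≠ s`, `idoms v` is a strict s-dominator of `v` that is
s-dominated by every strict s-dominator of `v`. -/
def IsIdomS (E : V → V → Prop) (s : V) (idoms : V → V) : Prop :=
  idoms s = s ∧ ∀ v, v ≠ s → idoms v ≠ v ∧ SDom E s (idoms v) v ∧
    ∀ u, u ≠ v → SDom E s u v → SDom E s u (idoms v)

/-- Immediate t-dominator (parent in the t-dominator tree) function. -/
def IsIdomT (E : V → V → Prop) (t : V) (idomt : V → V) : Prop :=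
  idomt t = t ∧ ∀ v, v ≠ t → idomt v ≠ v ∧ TDom E t (idomt v) v ∧
    ∀ u, u ≠ v → TDom E t u v → TDom E t u (idomt v)

/-- In the tree with parent function `par` rooted at `root`, `c` is the unique child
of `p`. -/
def UniqueChild (par : V → V) (root c p : V) : Prop :=
  c ≠ root ∧ par c = p ∧ ∀ y, y ≠ root → par y = p → y = c

/-- A univocal path `v₁ … v_k`: in the t-dominator tree each `v_{i+1}` has `v_i`
as its unique child, and `v_k … v_1` is a path in the s-dominator tree where each
vertex but the deepest (`v_k`) has exactly one child. -/
def IsUnivocal (idoms idomt : V → V) (s t : V) (l : List V) : Prop :=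
  l ≠ [] ∧ l.Chain' (fun a b => UniqueChild idomt t a b ∧ UniqueChild idoms s b a)

/-- A maximal univocal path: not properly contained in another univocal path. -/
def IsMaximalUnivocal (idoms idomt : V → V) (s t : V) (l : List V) : Prop :=
  IsUnivocal idoms idomt s t l ∧
    ∀ l', IsUnivocal idoms idomt s t l' → l <:+: l' → l' = l

/-- `X` is a maximal safe sequence for walk covers (covering all vertices):
it is safe and no proper supersequence of it is safe. -/
def MaximalSafe (E : V → V → Prop) (s t : V) (X : List V) : Prop :=
  SafeSeq E s t Set.univ X ∧ ∀ Y, X.Sublist Y → Y ≠ X → ¬ SafeSeq E s t Set.univ Y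

/-- Edge `e` reaches edge `e'`: there is a (possibly empty) path from the head of `e`
to the tail of `e'`. -/
def EReach (E : V → V → Prop) (e e' : V × V) : Prop := Relation.ReflTransGen E e.2 e'.1

/-- `P` is a cover of the edge set `C` by `s`-`t` walks. -/
def EdgeWalkCover (E : V → V → Prop) (s t : V) (C : Set (V × V)) (P : Set (List V)) : Prop :=
  (∀ w ∈ P, IsWalkFromTo E s t w) ∧ ∀ c ∈ C, ∃ w ∈ P, c ∈ walkEdges w

/-- A `C`-safe sequence of edges: every cover of `C` by `s`-`t` walks contains a walk
traversing the edges of `S` in order. -/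
def SafeEdgeSeq (E : V → V → Prop) (s t : V) (C : Set (V × V)) (S : List (V × V)) : Prop :=
  ∀ P, EdgeWalkCover E s t C P → ∃ w ∈ P, S.Sublist (walkEdges w)

lemma dup_split {x : V} : ∀ {l : List V}, l.Duplicate x → ∃ l1 l2, l = l1 ++ x :: l2 ∧ x ∈ l2 := by
  intro l h
  induction h with
  | cons_mem h => exact ⟨[], _, rfl, h⟩
  | @cons_duplicate y l _ ih =>
    obtain ⟨l1, l2, rfl, hm⟩ := ih
    exact ⟨y :: l1, l2, rfl, hm⟩

lemma exists_nodup_walk {E : V → V → Prop} :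
    ∀ (n : ℕ) (w : List V), w.length ≤ n → w ≠ [] → w.Chain' E →
    ∃ p : List V, p ≠ [] ∧ p.Chain' E ∧ p.Nodup ∧ p.head? = w.head? ∧
      p.getLast? = w.getLast? ∧ ∀ x ∈ p, x ∈ w := by
  intro n
  induction n with
  | zero =>
    intro w hw hne _
    rw [Nat.le_zero, List.length_eq_zero_iff] at hw
    exact absurd hw hne
  | succ n ih =>
    intro w hw hne hch
    by_cases hnd : w.Nodup
    · exact ⟨w, hne, hch, hnd, rfl, rfl, fun x hx => hx⟩
    · obtain ⟨x, hdup⟩ := List.exists_duplicate_iff_not_nodup.2 hnd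
      obtain ⟨l1, l2, rfl, hx2⟩ := dup_split hdup
      obtain ⟨l2a, l2b, rfl⟩ := List.append_of_mem hx2
      set w' : List V := l1 ++ x :: l2b with hw'
      have hlen : w'.length ≤ n := by
        simp only [hw', List.length_append, List.length_cons] at hw ⊢
        omega
      have hch' : w'.Chain' E := by
        have h1 := List.isChain_split.1 hch
        have h2 := List.isChain_split.1 (show List.Chain' E ((x :: l2a) ++ x :: l2b) from h1.2)
        exact List.isChain_split.2 ⟨h1.1, h2.2⟩
      have hne' : w' ≠ [] := by simp [hw']
      obtain ⟨p, hp1, hp2, hp3, hp4, hp5, hp6⟩ := ih w' hlen hne' hch'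
      refine ⟨p, hp1, hp2, hp3, ?_, ?_, ?_⟩
      · rw [hp4, hw']; cases l1 <;> simp
      · rw [hp5, hw']
        rw [show l1 ++ x :: (l2a ++ x :: l2b) = (l1 ++ x :: l2a) ++ (x :: l2b) by simp]
        rw [List.getLast?_append_of_ne_nil _ (List.cons_ne_nil _ _),
            List.getLast?_append_of_ne_nil _ (List.cons_ne_nil _ _)]
      · intro y hy
        have := hp6 y hy
        simp only [hw', List.mem_append, List.mem_cons] at this ⊢
        tauto

lemma sdom_mem_walk {E : V → V → Prop} {s u z : V} {w : List V}
    (h : SDom E s u z) (hw : IsWalkFromTo E s z w) : u ∈ w := by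
  obtain ⟨⟨hne, hch⟩, hh, hl⟩ := hw
  obtain ⟨p, hp1, hp2, hp3, hp4, hp5, hp6⟩ := exists_nodup_walk w.length w le_rfl hne hch
  exact hp6 u (h p ⟨⟨⟨hp1, hp2⟩, hp4.trans hh, hp5.trans hl⟩, hp3⟩)

lemma chain_sublist_walk {E : V → V → Prop} {s : V} :
    ∀ (n : ℕ) (c : List V) (z : V) (w : List V), c.length ≤ n →
    c.Chain' (SDom E s) → c.Nodup → c.getLast? = some z →
    IsWalkFromTo E s z w → c.Sublist w := by
  intro n
  induction n with
  | zero =>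
    intro c z w hl _ _ hlast _
    rw [Nat.le_zero, List.length_eq_zero_iff] at hl
    subst hl; simp at hlast
  | succ n ih =>
    intro c z w hl hch hnd hlast hw
    obtain ⟨d, rfl⟩ := List.getLast?_eq_some_iff.1 hlast
    rcases d.eq_nil_or_concat' with rfl | ⟨d', u, rfl⟩
    · simpa using List.mem_of_mem_getLast? (by rw [hw.2.2]; rfl)
    · have hchsp := List.isChain_split.1 (show List.Chain' (SDom E s) (d' ++ u :: [z]) by
        simpa using hch)
      have huz : SDom E s u z := (List.isChain_cons_cons.1 hchsp.2).1
      have hune : u ≠ z := by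
        rintro rfl
        simp [List.nodup_append] at hnd
      have humem : u ∈ w := sdom_mem_walk huz hw
      obtain ⟨w1', w2, rfl⟩ := List.append_of_mem humem
      obtain ⟨⟨hwne, hwch⟩, hwh, hwl⟩ := hw
      have hw2ne : w2 ≠ [] := by
        rintro rfl
        rw [show w1' ++ u :: ([] : List V) = w1' ++ [u] from rfl, List.getLast?_concat] at hwl
        exact hune (by injection hwl)
      have hzw2 : z ∈ w2 := by
        rw [show w1' ++ u :: w2 = (w1' ++ [u]) ++ w2 by simp,
          List.getLast?_append_of_ne_nil _ hw2ne] at hwl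
        exact List.mem_of_mem_getLast? (by rw [hwl]; rfl)
      have hw1 : IsWalkFromTo E s u (w1' ++ [u]) := by
        refine ⟨⟨by simp, ?_⟩, ?_, List.getLast?_concat⟩
        · exact (List.isChain_split.1 hwch).1
        · rw [← hwh]; cases w1' <;> simp
      have hd : (d' ++ [u]).Sublist (w1' ++ [u]) := by
        refine ih (d' ++ [u]) u (w1' ++ [u]) ?_ ?_ ?_ (List.getLast?_concat) hw1
        · simp only [List.length_append, List.length_cons, List.length_nil] at hl ⊢; omega
        · exact hchsp.1
        · exact hnd.of_append_left
      calc List.Sublist (d' ++ [u] ++ [z]) ((w1' ++ [u]) ++ w2) :=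
            hd.append (List.singleton_sublist.2 hzw2)
        _ = w1' ++ u :: w2 := by simp


lemma walk_rev {E : V → V → Prop} {a b : V} {p : List V} (h : IsWalkFromTo E a b p) :
    IsWalkFromTo (flip E) b a p.reverse := by
  obtain ⟨⟨hne, hch⟩, hh, hl⟩ := h
  refine ⟨⟨by simpa using hne, ?_⟩, by simpa using hl, by simpa using hh⟩
  exact List.isChain_reverse.2 hch

lemma path_rev {E : V → V → Prop} {a b : V} {p : List V} (h : IsPathFromTo E a b p) :
    IsPathFromTo (flip E) b a p.reverse :=
  ⟨walk_rev h.1, (List.nodup_reverse.2 h.2)⟩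

lemma tdom_flip {E : V → V → Prop} {t u v : V} (h : TDom E t u v) : SDom (flip E) t u v := by
  intro p hp
  have hm := h p.reverse (path_rev hp)
  simpa using hm


/-- for every vertex `v`, the extension `ext v` is a safe sequence:
every walk cover of all vertices contains a walk having `ext v` as a subsequence. -/
theorem stmt10 {V : Type*} [Fintype V] (E : V → V → Prop) (s t : V)
    (hs : UniqueSource E s) (ht : UniqueSink E t)
    (hall : ∀ a : V, ∃ p, IsPathFromTo E s t p ∧ a ∈ p)
    (v : V) (x : List V) (hx : IsExtension E s t v x) :
    SafeSeq E s t Set.univ x := by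
  obtain ⟨ds, dt, hds, hdt, rfl⟩ := hx
  rintro P ⟨hPw, hPc⟩
  obtain ⟨w, hwP, hvw⟩ := hPc v (Set.mem_univ v)
  refine ⟨w, hwP, ?_⟩
  obtain ⟨⟨hwne, hwch⟩, hwh, hwl⟩ := hPw w hwP
  obtain ⟨l1, l2, hwdef⟩ := List.append_of_mem hvw
  subst hwdef
  obtain ⟨hc1, hc2⟩ := List.isChain_split.1 hwch
  have hp1 : IsWalkFromTo E s v (l1 ++ [v]) := by
    refine ⟨⟨by simp, hc1⟩, ?_, List.getLast?_concat⟩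
    rw [← hwh]; cases l1 <;> simp
  have hp2 : IsWalkFromTo E v t (v :: l2) := by
    refine ⟨⟨by simp, hc2⟩, rfl, ?_⟩
    rw [← hwl, show l1 ++ v :: l2 = l1 ++ (v :: l2) from rfl,
      List.getLast?_append_of_ne_nil _ (List.cons_ne_nil _ _)]
  obtain ⟨hdsnd, hdsmem, hdsch, hdsh, hdsl⟩ := hds
  obtain ⟨hdtnd, hdtmem, hdtch, hdth, hdtl⟩ := hdt
  have h1 : ds.Sublist (l1 ++ [v]) :=
    chain_sublist_walk ds.length ds v _ le_rfl hdsch hdsnd hdsl hp1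
  have h2r : dt.reverse.Sublist (v :: l2).reverse := by
    refine chain_sublist_walk (E := flip E) (s := t) dt.reverse.length dt.reverse v
      (v :: l2).reverse le_rfl ?_ (List.nodup_reverse.2 hdtnd) (by simpa using hdth) (walk_rev hp2)
    refine List.isChain_reverse.2 ?_
    exact List.IsChain.imp (fun a b h => tdom_flip h) hdtch
  have h2 : dt.Sublist (v :: l2) := List.reverse_sublist.1 h2r
  have hdtc : dt = v :: dt.tail := by
    cases dt with
    | nil => simp at hdth
    | cons a l => simp only [List.head?_cons, Option.some.injEq] at hdth; rw [hdth]; rfl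
  rw [hdtc] at h2
  have h3 : dt.tail.Sublist l2 := List.cons_sublist_cons.1 h2
  have h4 := h1.append h3
  simpa using h4

end FD
end

section
/- Let G be a directed graph with unique source s and unique sink t, every vertex lying on an s-t path. If a sequence X of vertices is NOT a subsequence of ext(v) for any vertex v in a given set C ⊆ V, then there exists a C-walk cover of G in which no walk contains X as a subsequence; hence X is not C-safe. -/
namespace FD

variable {V : Type*}

section Helpers


variable {E : V → V → Prop}

lemma chain'_imp_mem {α : Type*} {R S : α → α → Prop} :
    ∀ {l : List α}, (∀ a b, a ∈ l → b ∈ l → R a b → S a b) → l.Chain' R → l.Chain' S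
  | [], _, _ => List.isChain_nil
  | [_], _, _ => List.isChain_singleton _
  | a :: b :: t, h, hc => by
      rw [List.Chain', List.isChain_cons_cons] at hc ⊢
      refine ⟨h a b (by simp) (by simp) hc.1, ?_⟩
      exact chain'_imp_mem (fun x y hx hy => h x y (List.mem_cons_of_mem _ hx)
        (List.mem_cons_of_mem _ hy)) hc.2

lemma path_prefix {u c : V} :
    ∀ {p : List V}, IsWalk E p → p.Nodup → p.head? = some u → c ∈ p →
      ∃ q, IsPathFromTo E u c q ∧ q <+: p
  | [], _, _, _, hc => absurd hc List.not_mem_nil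
  | x :: p', hw, hnd, hh, hc => by
      have hxu : x = u := by simpa using hh
      subst hxu
      by_cases hcx : c = x
      · subst hcx
        exact ⟨[c], ⟨⟨⟨by simp, List.isChain_singleton _⟩, rfl, rfl⟩, List.nodup_singleton _⟩,
          ⟨p', rfl⟩⟩
      · have hcp' : c ∈ p' := by
          rcases List.mem_cons.mp hc with h | h
          · exact absurd h hcx
          · exact h
        have hp'ne : p' ≠ [] := by rintro rfl; exact hcx (by simpa using hc)
        obtain ⟨y, p'', rfl⟩ := List.exists_cons_of_ne_nil hp'ne
        have hw' : IsWalk E (y :: p'') := ⟨by simp, (List.isChain_cons_cons.mp hw.2).2⟩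
        obtain ⟨q, hq, hpre⟩ := path_prefix hw' hnd.of_cons rfl hcp'
        refine ⟨x :: q, ⟨⟨⟨by simp, ?_⟩, ?_, ?_⟩, ?_⟩, ?_⟩
        · rw [List.Chain', List.isChain_cons]
          refine ⟨?_, hq.1.1.2⟩
          intro z hz
          have : z = y := by
            have := hq.1.2.1
            rcases q with _ | ⟨q0, qt⟩
            · simp at hz
            · have h1 : q0 = y := by simpa using this
              have h2 : q0 = z := by simpa using hz
              rw [← h2, h1]
          subst this
          exact (List.isChain_cons_cons.mp hw.2).1
        · rfl
        · have h2 := hq.1.2.2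
          rw [show x :: q = [x] ++ q from rfl, List.getLast?_append, h2]
          rfl
        · refine List.nodup_cons.mpr ⟨?_, hq.2⟩
          intro hxq
          exact (List.nodup_cons.mp hnd).1 (hpre.subset hxq)
        · obtain ⟨r, hr⟩ := hpre
          exact ⟨r, by rw [List.cons_append, hr]⟩


lemma getLast?_cons_ne_nil {x : V} {t : List V} (h : t ≠ []) :
    (x :: t).getLast? = t.getLast? := by
  rw [show x :: t = [x] ++ t from rfl, List.getLast?_append,
    List.getLast?_eq_getLast h]
  rfl

lemma path_suffix {w c : V} :
    ∀ {p : List V}, IsWalk E p → p.Nodup → p.getLast? = some w → c ∈ p →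
      ∃ r, IsPathFromTo E c w r ∧ r <:+ p
  | [], _, _, _, hc => absurd hc List.not_mem_nil
  | x :: p', hw, hnd, hl, hc => by
      by_cases hcp' : c ∈ p'
      · have hp'ne : p' ≠ [] := by rintro rfl; simp at hcp'
        have hw' : IsWalk E p' := ⟨hp'ne, hw.2.tail⟩
        have hl' : p'.getLast? = some w := by
          rwa [getLast?_cons_ne_nil hp'ne] at hl
        obtain ⟨r, hr, hsuf⟩ := path_suffix hw' hnd.of_cons hl' hcp'
        exact ⟨r, hr, hsuf.trans (List.suffix_cons x p')⟩
      · have hcx : c = x := by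
          rcases List.mem_cons.mp hc with h | h
          · exact h
          · exact absurd h hcp'
        subst hcx
        have hh : (c :: p').head? = some c := rfl
        exact ⟨c :: p', ⟨⟨hw, hh, hl⟩, hnd⟩, List.suffix_refl _⟩

lemma not_mem_suffix {r r' : List V} {y b : V} (hnd : r.Nodup) (hh : r.head? = some y)
    (hsuf : r' <:+ r) (hh' : r'.head? = some b) (hne : b ≠ y) : y ∉ r' := by
  obtain ⟨pre, hpre⟩ := hsuf
  rcases pre with _ | ⟨x, pre'⟩
  · simp only [List.nil_append] at hpre
    subst hpre
    rw [hh] at hh'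
    exact absurd (by simpa using hh'.symm) hne
  · subst hpre
    have hxy : x = y := by simpa using hh
    subst hxy
    have := List.nodup_append.mp hnd
    exact fun hmem => this.2.2 _ (by simp) _ hmem rfl

lemma not_mem_prefix {p q : List V} {b c : V} (hnd : p.Nodup) (hl : p.getLast? = some b)
    (hpre : q <+: p) (hl' : q.getLast? = some c) (hne : c ≠ b) : b ∉ q := by
  obtain ⟨r, hr⟩ := hpre
  rcases r with _ | ⟨x, r'⟩
  · rw [List.append_nil] at hr
    subst hr
    rw [hl] at hl'
    exact absurd (by simpa using hl'.symm) hne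
  · subst hr
    have hbr : b ∈ x :: r' := by
      rw [List.getLast?_append] at hl
      have hx : (x :: r').getLast? = some b := by
        rcases h : (x :: r').getLast? with _ | z
        · simp at h
        · rw [h] at hl; simpa using hl
      exact List.mem_of_mem_getLast? (by rw [hx]; rfl)
    have := List.nodup_append.mp hnd
    exact fun hmem => this.2.2 b hmem b hbr rfl

lemma walk_append {u m v : V} {w1 w2 : List V} (h1 : IsWalkFromTo E u m w1)
    (h2 : IsWalkFromTo E m v w2) : IsWalkFromTo E u v (w1 ++ w2.tail) := by
  obtain ⟨⟨hne1, hch1⟩, hh1, hl1⟩ := h1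
  obtain ⟨⟨hne2, hch2⟩, hh2, hl2⟩ := h2
  obtain ⟨x, t, rfl⟩ := List.exists_cons_of_ne_nil hne2
  have hxm : x = m := by simpa using hh2
  subst hxm
  refine ⟨⟨by simp [hne1], ?_⟩, ?_, ?_⟩
  · rw [List.Chain', List.isChain_append]
    refine ⟨hch1, hch2.tail, ?_⟩
    intro a ha y hy
    rw [hl1] at ha
    have hxa : x = a := by simpa using ha
    subst hxa
    exact (List.isChain_cons.mp hch2).1 y hy
  · rw [List.head?_append, hh1]; rfl
  · rcases t with _ | ⟨z, t'⟩
    · simp only [List.tail_cons, List.append_nil]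
      rw [hl1]
      simpa using hl2
    · rw [List.tail_cons, List.getLast?_append]
      rw [getLast?_cons_ne_nil (by simp : (z :: t') ≠ [])] at hl2
      rw [hl2]; rfl

lemma exists_dup_decomp :
    ∀ {l : List V}, ¬ l.Nodup → ∃ (a : V) (l₁ l₂ l₃ : List V), l = l₁ ++ a :: (l₂ ++ a :: l₃)
  | [], h => absurd List.nodup_nil h
  | x :: l', h => by
      classical
      by_cases hx : x ∈ l'
      · obtain ⟨s, t, rfl⟩ := List.append_of_mem hx
        exact ⟨x, [], s, t, by simp⟩
      · have : ¬ l'.Nodup := fun hn => h (List.nodup_cons.mpr ⟨hx, hn⟩)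
        obtain ⟨a, l₁, l₂, l₃, rfl⟩ := exists_dup_decomp this
        exact ⟨a, x :: l₁, l₂, l₃, by simp⟩

lemma walk_to_path_aux {u v : V} :
    ∀ (n : ℕ) (w : List V), w.length ≤ n → IsWalkFromTo E u v w →
      ∃ p, IsPathFromTo E u v p ∧ ∀ x ∈ p, x ∈ w := by
  intro n
  induction n with
  | zero =>
    intro w hlen hw
    have : w = [] := List.length_eq_zero_iff.mp (Nat.le_zero.mp hlen)
    exact absurd this hw.1.1
  | succ n IH =>
    intro w hlen hw
    by_cases hnd : w.Nodup
    · exact ⟨w, ⟨hw, hnd⟩, fun x hx => hx⟩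
    · obtain ⟨a, l₁, l₂, l₃, rfl⟩ := exists_dup_decomp hnd
      obtain ⟨⟨hne, hch⟩, hh, hl⟩ := hw
      have hw' : IsWalkFromTo E u v (l₁ ++ a :: l₃) := by
        refine ⟨⟨by simp, ?_⟩, ?_, ?_⟩
        · rw [List.Chain', List.isChain_append] at hch ⊢
          refine ⟨hch.1, hch.2.1.suffix ⟨a :: l₂, rfl⟩, ?_⟩
          intro x hx y hy
          refine hch.2.2 x hx y ?_
          simpa using hy
        · rw [List.head?_append] at hh ⊢
          simpa using hh
        · rw [List.getLast?_append] at hl ⊢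
          rw [show a :: (l₂ ++ a :: l₃) = (a :: l₂) ++ (a :: l₃) from by simp,
            List.getLast?_append] at hl
          rcases h : (a :: l₃).getLast? with _ | z
          · simp at h
          · rw [h] at hl; simpa using hl
      have hlen' : (l₁ ++ a :: l₃).length ≤ n := by
        have h1 : (l₁ ++ a :: (l₂ ++ a :: l₃)).length ≤ n + 1 := hlen
        simp only [List.length_append, List.length_cons] at h1 ⊢
        omega
      obtain ⟨p, hp, hsub⟩ := IH _ hlen' hw'
      refine ⟨p, hp, fun x hx => ?_⟩
      have := hsub x hx
      simp only [List.mem_append, List.mem_cons] at this ⊢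
      tauto

lemma walk_to_path {u v : V} {w : List V} (hw : IsWalkFromTo E u v w) :
    ∃ p, IsPathFromTo E u v p ∧ ∀ x ∈ p, x ∈ w :=
  walk_to_path_aux w.length w le_rfl hw

lemma sdom_trans {u a b c : V} (hab : SDom E u a b) (hbc : SDom E u b c) : SDom E u a c := by
  intro p hp
  have hb := hbc p hp
  obtain ⟨q, hq, hpre⟩ := path_prefix hp.1.1 hp.2 hp.1.2.1 hb
  exact hpre.subset (hab q hq)

lemma sdom_antisymm {u a b : V} (hab : SDom E u a b) (hba : SDom E u b a)
    (hex : ∃ p, IsPathFromTo E u b p) : a = b := by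
  by_contra hne
  obtain ⟨p, hp⟩ := hex
  have ha := hab p hp
  obtain ⟨q, hq, hpre⟩ := path_prefix hp.1.1 hp.2 hp.1.2.1 ha
  have hbq := hba q hq
  exact not_mem_prefix hp.2 hp.1.2.2 hpre hq.1.2.2 hne hbq


/-- Core lemma: if the "all-dominators + strict chain" property fails for `Y`
(w.r.t. source `u`, target `v`), there is a `u`-`v` walk avoiding `Y` as a subsequence. -/
lemma lemA :
    ∀ (Y : List V), Y.Nodup → ∀ u v : V, (∃ p, IsPathFromTo E u v p) →
      ¬((∀ y ∈ Y, SDom E u y v) ∧ Y.Chain' (fun a b => SDom E u a b ∧ a ≠ b)) →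
      ∃ w, IsWalkFromTo E u v w ∧ ¬ Y.Sublist w := by
  intro Y
  induction Y with
  | nil =>
    intro _ u v _ hP
    exact absurd ⟨by simp, List.isChain_nil⟩ hP
  | cons y Y' IH =>
    intro hnd u v hex hP
    classical
    by_cases hD : SDom E u y v
    · obtain ⟨p, hp⟩ := hex
      have hy : y ∈ p := hD p hp
      obtain ⟨r0, hr0, _⟩ := path_suffix hp.1.1 hp.2 hp.1.2.2 hy
      -- a useful tool: from a u→b path avoiding y and a b→v path avoiding y, contradiction
      have tool : ∀ (b : V) (q : List V), IsPathFromTo E u b q → y ∉ q → b ≠ y →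
          SDom E y b v → False := by
        intro b q hq hyq hby hbv
        have hbr0 : b ∈ r0 := hbv r0 hr0
        obtain ⟨r', hr', hsuf⟩ := path_suffix hr0.1.1 hr0.2 hr0.1.2.2 hbr0
        have hynr' : y ∉ r' :=
          not_mem_suffix hr0.2 hr0.1.2.1 hsuf hr'.1.2.1 hby
        have hwalk : IsWalkFromTo E u v (q ++ r'.tail) := walk_append hq.1 hr'.1
        obtain ⟨p'', hp'', hsub⟩ := walk_to_path hwalk
        have : y ∈ q ++ r'.tail := hsub y (hD p'' hp'')
        rcases List.mem_append.mp this with h | h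
        · exact hyq h
        · exact hynr' (List.tail_sublist r' |>.subset h)
      have hnP : ¬((∀ z ∈ Y', SDom E y z v) ∧
          Y'.Chain' (fun a b => SDom E y a b ∧ a ≠ b)) := by
        rintro ⟨hall', hch'⟩
        apply hP
        constructor
        · intro z hz
          rcases List.mem_cons.mp hz with rfl | hz'
          · exact hD
          · intro p' hp'
            have hyp' : y ∈ p' := hD p' hp'
            obtain ⟨r', hr', hsuf⟩ := path_suffix hp'.1.1 hp'.2 hp'.1.2.2 hyp'
            exact hsuf.subset (hall' z hz' r' hr')
        · rw [List.Chain', List.isChain_cons]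
          constructor
          · intro z hz
            have hzY' : z ∈ Y' := by
              rcases Y' with _ | ⟨z0, Yt⟩
              · simp at hz
              · have : z0 = z := by simpa using hz
                simp [← this]
            have hyz : y ≠ z := fun h => (List.nodup_cons.mp hnd).1 (h ▸ hzY')
            refine ⟨?_, hyz⟩
            intro q hq
            by_contra hyq
            exact tool z q hq hyq (Ne.symm hyz) (hall' z hzY')
          · refine chain'_imp_mem (fun a b _ hb hab => ?_) hch'
            refine ⟨?_, hab.2⟩
            intro q hq
            by_cases hyq : y ∈ q
            · obtain ⟨r', hr', hsuf⟩ := path_suffix hq.1.1 hq.2 hq.1.2.2 hyq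
              exact hsuf.subset (hab.1 r' hr')
            · by_cases hby : b = y
              · subst hby
                have : IsPathFromTo E b b [b] :=
                  ⟨⟨⟨by simp, List.isChain_singleton _⟩, rfl, rfl⟩, List.nodup_singleton _⟩
                have ha := hab.1 [b] this
                exact absurd (by simpa using ha) hab.2
              · exact absurd (tool b q hq hyq hby (hall' b hb)) not_false
      obtain ⟨Wy, hWy, hYW⟩ := IH hnd.of_cons y v ⟨r0, hr0⟩ hnP
      obtain ⟨p0, hp0, _⟩ := path_prefix hp.1.1 hp.2 hp.1.2.1 hy
      refine ⟨p0 ++ Wy.tail, walk_append hp0.1 hWy, ?_⟩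
      intro hsub
      rw [List.sublist_append_iff] at hsub
      obtain ⟨A, B, hAB, hA, hB⟩ := hsub
      rcases A with _ | ⟨a0, A'⟩
      · simp only [List.nil_append] at hAB
        subst hAB
        exact hYW ((List.sublist_cons_self y Y').trans (hB.trans (List.tail_sublist _)))
      · have ha0 : y = a0 := by
          have := congrArg List.head? hAB
          simpa using this
        subst ha0
        have hA'B : A' ++ B = Y' := (by simpa using hAB : Y' = A' ++ B).symm
        -- p0 = dropLast ++ [y], y not in dropLast
        have hp0ne : p0 ≠ [] := hp0.1.1.1
        have hlast : p0.getLast hp0ne = y := by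
          have := hp0.1.2.2
          rw [List.getLast?_eq_getLast hp0ne] at this
          simpa using this
        have hsplit : p0 = p0.dropLast ++ [y] := by
          conv_lhs => rw [← List.dropLast_append_getLast hp0ne]
          rw [hlast]
        have hynd : y ∉ p0.dropLast := by
          have hnd0 := hp0.2
          rw [hsplit, List.nodup_append] at hnd0
          exact fun hmem => hnd0.2.2 y hmem y (by simp) rfl
        rw [hsplit, List.sublist_append_iff] at hA
        obtain ⟨A1, A2, hA12, hA1, hA2⟩ := hA
        rcases A1 with _ | ⟨b0, B1⟩
        · simp only [List.nil_append] at hA12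
          subst hA12
          have : A' = [] := by
            have hlen := hA2.length_le
            simpa using hlen
          subst this
          simp only [List.nil_append] at hA'B
          subst hA'B
          exact hYW (hB.trans (List.tail_sublist _))
        · have hb0 : y = b0 := by
            have := congrArg List.head? hA12
            simpa using this
          subst hb0
          exact hynd (hA1.subset (by simp))
    · have : ∃ p, IsPathFromTo E u v p ∧ y ∉ p := by
        by_contra h
        push_neg at h
        exact hD fun p hp => h p hp
      obtain ⟨p, hp, hyp⟩ := this
      exact ⟨p, hp.1, fun hsub => hyp (hsub.subset (by simp))⟩


lemma chain_sublist {u : V} :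
    ∀ (ds : List V), ds.Nodup → ds.Pairwise (fun a b => SDom E u a b) →
      (∀ z ∈ ds, ∃ p, IsPathFromTo E u z p) →
      ∀ (Y : List V), (∀ z ∈ Y, z ∈ ds) →
        Y.Pairwise (fun a b => SDom E u a b ∧ a ≠ b) → Y.Sublist ds
  | [], _, _, _, Y, hmem, _ => by
      have : Y = [] := List.eq_nil_iff_forall_not_mem.mpr fun a ha =>
        List.not_mem_nil (hmem a ha)
      simp [this]
  | d :: ds', hnd, hpw, hreach, Y, hmem, hYpw => by
      classical
      rcases Y with _ | ⟨y, Y'⟩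
      · exact List.nil_sublist _
      · by_cases hyd : y = d
        · subst hyd
          refine List.Sublist.cons₂ y (chain_sublist ds' hnd.of_cons hpw.of_cons
            (fun z hz => hreach z (List.mem_cons_of_mem _ hz)) Y' ?_ hYpw.of_cons)
          intro z hz
          rcases List.mem_cons.mp (hmem z (List.mem_cons_of_mem _ hz)) with rfl | h
          · exact absurd rfl ((List.pairwise_cons.mp hYpw).1 z hz).2
          · exact h
        · refine List.Sublist.cons d (chain_sublist ds' hnd.of_cons hpw.of_cons
            (fun z hz => hreach z (List.mem_cons_of_mem _ hz)) (y :: Y') ?_ hYpw)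
          intro z hz
          rcases List.mem_cons.mp hz with rfl | hz'
          · rcases List.mem_cons.mp (hmem z (by simp)) with rfl | h
            · exact absurd rfl hyd
            · exact h
          · rcases List.mem_cons.mp (hmem z (List.mem_cons_of_mem _ hz')) with rfl | h
            · -- z = d ∈ Y' : contradiction via antisymmetry
              exfalso
              have hyz := (List.pairwise_cons.mp hYpw).1 z hz'
              have hym : y ∈ z :: ds' := hmem y (by simp)
              have hyds' : y ∈ ds' := by
                rcases List.mem_cons.mp hym with rfl | h
                · exact absurd rfl hyd
                · exact h
              have hdy : SDom E u z y := (List.pairwise_cons.mp hpw).1 y hyds'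
              have := sdom_antisymm hyz.1 hdy (hreach z (by simp))
              exact hyd this
            · exact h

lemma L1 {s v : V} {ds : List V}
    (hds : ds.Nodup ∧ (∀ u, u ∈ ds ↔ SDom E s u v) ∧
      ds.Chain' (fun a b => SDom E s a b) ∧ ds.head? = some s ∧ ds.getLast? = some v)
    (hex : ∃ p, IsPathFromTo E s v p) (Y : List V) (hY : ¬ Y.Sublist ds) :
    ∃ w, IsWalkFromTo E s v w ∧ ¬ Y.Sublist w := by
  classical
  obtain ⟨hnd, hmemiff, hch, hh, hl⟩ := hds
  by_cases hnY : Y.Nodup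
  · apply lemA Y hnY s v hex
    rintro ⟨hall', hchY⟩
    apply hY
    have hreach : ∀ z ∈ ds, ∃ p, IsPathFromTo E s z p := by
      intro z hz
      obtain ⟨p, hp⟩ := hex
      have : z ∈ p := (hmemiff z).mp hz p hp
      obtain ⟨q, hq, _⟩ := path_prefix hp.1.1 hp.2 hp.1.2.1 this
      exact ⟨q, hq⟩
    have hpw : ds.Pairwise (fun a b => SDom E s a b) := by
      haveI : IsTrans V (fun a b : V => SDom E s a b) := ⟨fun _ _ _ => sdom_trans⟩
      exact List.isChain_iff_pairwise.mp hch
    -- strengthen Y's chain with reachability, then use transitivity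
    have hchY' : Y.Chain' (fun a b => (SDom E s a b ∧ a ≠ b) ∧ ∃ p, IsPathFromTo E s b p) := by
      refine chain'_imp_mem (fun a b _ hb hab => ⟨hab, ?_⟩) hchY
      exact hreach b ((hmemiff b).mpr (hall' b hb))
    have hYpw : Y.Pairwise (fun a b => SDom E s a b ∧ a ≠ b) := by
      haveI : IsTrans V (fun a b : V =>
          (SDom E s a b ∧ a ≠ b) ∧ ∃ p, IsPathFromTo E s b p) := by
        constructor
        rintro a b c ⟨⟨hab, hne1⟩, hexb⟩ ⟨⟨hbc, hne2⟩, hexc⟩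
        refine ⟨⟨sdom_trans hab hbc, ?_⟩, hexc⟩
        rintro rfl
        exact hne2 (sdom_antisymm hbc hab hexc)
      exact (List.isChain_iff_pairwise.mp hchY').imp (fun h => h.1)
    exact chain_sublist ds hnd hpw hreach Y
      (fun z hz => (hmemiff z).mpr (hall' z hz)) hYpw
  · obtain ⟨p, hp⟩ := hex
    exact ⟨p, hp.1, fun hsub => hnY (hsub.nodup hp.2)⟩


lemma path_reverse {u v : V} {p : List V} (h : IsPathFromTo E u v p) :
    IsPathFromTo (fun a b => E b a) v u p.reverse := by
  obtain ⟨⟨⟨hne, hch⟩, hh, hl⟩, hnd⟩ := h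
  refine ⟨⟨⟨by simpa using hne, ?_⟩, by rw [List.head?_reverse]; exact hl,
    by rw [List.getLast?_reverse]; exact hh⟩, by simpa using hnd⟩
  rw [List.Chain', List.isChain_reverse]
  exact hch

lemma walk_reverse {u v : V} {w : List V} (h : IsWalkFromTo E u v w) :
    IsWalkFromTo (fun a b => E b a) v u w.reverse := by
  obtain ⟨⟨hne, hch⟩, hh, hl⟩ := h
  refine ⟨⟨by simpa using hne, ?_⟩, by rw [List.head?_reverse]; exact hl,
    by rw [List.getLast?_reverse]; exact hh⟩
  rw [List.Chain', List.isChain_reverse]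
  exact hch

lemma L2 {t v : V} {dt : List V}
    (hdt : dt.Nodup ∧ (∀ u, u ∈ dt ↔ TDom E t u v) ∧
      dt.Chain' (fun a b => TDom E t b a) ∧ dt.head? = some v ∧ dt.getLast? = some t)
    (hex : ∃ p, IsPathFromTo E v t p) (Y : List V) (hY : ¬ Y.Sublist dt) :
    ∃ w, IsWalkFromTo E v t w ∧ ¬ Y.Sublist w := by
  obtain ⟨hnd, hmem, hch, hh, hl⟩ := hdt
  have htdom : ∀ u w : V, TDom E t u w ↔ SDom (fun a b => E b a) t u w := by
    intro u w
    constructor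
    · intro h p hp
      have h2 : IsPathFromTo E w t p.reverse := path_reverse (E := fun a b => E b a) hp
      have := h p.reverse h2
      simpa using this
    · intro h p hp
      have := h p.reverse (path_reverse hp)
      simpa using this
  have hds : dt.reverse.Nodup ∧
      (∀ u, u ∈ dt.reverse ↔ SDom (fun a b => E b a) t u v) ∧
      dt.reverse.Chain' (fun a b => SDom (fun a b => E b a) t a b) ∧
      dt.reverse.head? = some t ∧ dt.reverse.getLast? = some v := by
    refine ⟨by simpa using hnd, ?_, ?_, by rw [List.head?_reverse]; exact hl,
      by rw [List.getLast?_reverse]; exact hh⟩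
    · intro u
      rw [List.mem_reverse, ← htdom]
      exact hmem u
    · rw [List.Chain', List.isChain_reverse]
      exact hch.imp fun {a b} h => (htdom _ _).mp h
  have hex' : ∃ p, IsPathFromTo (fun a b => E b a) t v p := by
    obtain ⟨p, hp⟩ := hex
    exact ⟨p.reverse, path_reverse hp⟩
  have hY' : ¬ Y.reverse.Sublist dt.reverse := fun h => hY (List.reverse_sublist.mp h)
  obtain ⟨w, hw, hnsub⟩ := L1 (E := fun a b => E b a) hds hex' Y.reverse hY'
  refine ⟨w.reverse, walk_reverse (E := fun a b => E b a) hw, ?_⟩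
  intro h
  apply hnsub
  have h2 : Y.reverse.Sublist w.reverse.reverse := List.reverse_sublist.mpr h
  simpa using h2


end Helpers

/-- if `X` is not a subsequence of `ext v` for any `v ∈ C`, then there is
a `C`-walk cover none of whose walks contains `X` as a subsequence; hence `X` is not
`C`-safe. -/
theorem stmt11 {V : Type*} [Fintype V] (E : V → V → Prop) (s t : V)
    (hs : UniqueSource E s) (ht : UniqueSink E t)
    (hall : ∀ a : V, ∃ p, IsPathFromTo E s t p ∧ a ∈ p)
    (C : Set V) (ext : V → List V) (hext : ∀ a, IsExtension E s t a (ext a))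
    (X : List V) (hX : ¬ ∃ v ∈ C, X.Sublist (ext v)) :
    (∃ P, WalkCover E s t C P ∧ ∀ w ∈ P, ¬ X.Sublist w) ∧ ¬ SafeSeq E s t C X := by
  classical
  have main : ∀ v ∈ C, ∃ w, IsWalkFromTo E s t w ∧ v ∈ w ∧ ¬ X.Sublist w := by
    intro v hv
    obtain ⟨ds, dt, hds, hdt, hextv⟩ := hext v
    have hXv : ¬ X.Sublist (ds ++ dt.tail) := fun h => hX ⟨v, hv, hextv ▸ h⟩
    obtain ⟨pall, hpall, hvp⟩ := hall v
    obtain ⟨psv, hpsv, _⟩ := path_prefix hpall.1.1 hpall.2 hpall.1.2.1 hvp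
    obtain ⟨pvt, hpvt, _⟩ := path_suffix hpall.1.1 hpall.2 hpall.1.2.2 hvp
    set a := Nat.findGreatest (fun n => (X.take n).Sublist ds) X.length with ha
    have hta : (X.take a).Sublist ds := by
      rw [ha]
      exact Nat.findGreatest_spec (P := fun n => (X.take n).Sublist ds)
        (Nat.zero_le _) (by simp)
    have haX : a < X.length := by
      by_contra h
      push_neg at h
      apply hXv
      have hXds : X.Sublist ds := by
        have h2 := hta
        rwa [List.take_of_length_le h] at h2
      exact hXds.trans (List.sublist_append_left ds dt.tail)
    have hA1 : ¬ (X.take (a + 1)).Sublist ds := by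
      refine Nat.findGreatest_is_greatest (P := fun n => (X.take n).Sublist ds)
        (n := X.length) ?_ (by omega)
      rw [← ha]
      exact Nat.lt_succ_self a
    have hB : ¬ (X.drop a).Sublist dt.tail := by
      intro h
      exact hXv (List.take_append_drop a X ▸ hta.append h)
    have hdtne : dt ≠ [] := by
      intro h
      have := hdt.2.2.2.1
      rw [h] at this
      simp at this
    obtain ⟨d0, dtt, hdteq⟩ := List.exists_cons_of_ne_nil hdtne
    have hd0 : d0 = v := by
      have := hdt.2.2.2.1
      rw [hdteq] at this
      simpa using this
    have hdtv : dt = v :: dt.tail := by rw [hdteq, hd0]; simp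
    have hY2 : ¬ (v :: X.drop a).Sublist dt := by
      intro h
      rw [hdtv, List.cons_sublist_cons] at h
      exact hB h
    obtain ⟨W1, hW1, hnA⟩ := L1 hds ⟨psv, hpsv⟩ (X.take (a + 1)) hA1
    obtain ⟨W2, hW2, hnY⟩ := L2 hdt ⟨pvt, hpvt⟩ (v :: X.drop a) hY2
    refine ⟨W1 ++ W2.tail, walk_append hW1 hW2, ?_, ?_⟩
    · exact List.mem_append_left _ (List.mem_of_mem_getLast? (by rw [hW1.2.2]; rfl))
    · intro hsub
      rw [List.sublist_append_iff] at hsub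
      obtain ⟨A, B, hAB, hA, hB'⟩ := hsub
      by_cases hlen : a + 1 ≤ A.length
      · apply hnA
        have h1 : X.take (a + 1) = A.take (a + 1) := by
          rw [hAB]; exact List.take_append_of_le_length hlen
        rw [h1]
        exact (List.take_sublist _ _).trans hA
      · push_neg at hlen
        apply hnY
        have hW2c : W2 = v :: W2.tail := by
          have hne := hW2.1.1
          obtain ⟨x, xs, hxe⟩ := List.exists_cons_of_ne_nil hne
          have : x = v := by
            have := hW2.2.1
            rw [hxe] at this
            simpa using this
          rw [hxe, this]; simp
        rw [hW2c, List.cons_sublist_cons]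
        have h1 : X.drop a = B.drop (a - A.length) := by
          rw [hAB, List.drop_append,
            List.drop_eq_nil_of_le (by omega : A.length ≤ a), List.nil_append]
        rw [h1]
        exact (List.drop_sublist _ _).trans hB'
  refine ⟨⟨{w | IsWalkFromTo E s t w ∧ ¬ X.Sublist w}, ⟨fun w hw => hw.1, ?_⟩,
    fun w hw => hw.2⟩, ?_⟩
  · intro c hc
    obtain ⟨w, h1, h2, h3⟩ := main c hc
    exact ⟨w, ⟨h1, h3⟩, h2⟩
  · intro hsafe
    obtain ⟨w, hwP, hXw⟩ := hsafe {w | IsWalkFromTo E s t w ∧ ¬ X.Sublist w}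
      ⟨fun w hw => hw.1, fun c hc => by
        obtain ⟨w, h1, h2, h3⟩ := main c hc
        exact ⟨w, ⟨h1, h3⟩, h2⟩⟩
    exact hwP.2 hXw



end FD
end
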